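/- Let g be a natural number, Ω a symmetric g×g complex matrix whose imaginary part Im Ω is positive definite, a, b ∈ ℝ^g, and z ∈ ℂ^g. Then the function (Fin g → ℤ) → ℂ given by n ↦ exp(π·i·(n+a)ᵀ Ω (n+a) + 2π·i·(n+a)·(z+b)) is summable; that is, the series defining the genus-g Riemann theta function with characteristics θ[a,b](z,Ω) converges absolutely. -/

import Mathlib

open Matrix

-- 1D summability
lemma aux1 (α β t : ℝ) (hα : 0 < α) :
    Summable fun m : ℤ => Real.exp (-α * ((m : ℝ) + t) ^ 2 + β * |(m : ℝ) + t|) := by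
  have h := summable_pow_mul_jacobiTheta₂_term_bound ((2 * α * |t| + |β|) / (2 * Real.pi))
    (show 0 < α / Real.pi from div_pos hα Real.pi_pos) 0
  simp only [pow_zero, one_mul] at h
  refine ((h.mul_left (Real.exp (|β| * |t|))).of_nonneg_of_le
    (fun m => (Real.exp_pos _).le) (fun m => ?_))
  rw [← Real.exp_add, Real.exp_le_exp, Int.cast_abs]
  have hπ := Real.pi_pos
  have h1 : -Real.pi * (α / Real.pi * (m : ℝ) ^ 2 -
      2 * ((2 * α * |t| + |β|) / (2 * Real.pi)) * |(m : ℝ)|) =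
      -α * (m : ℝ) ^ 2 + (2 * α * |t| + |β|) * |(m : ℝ)| := by
    field_simp
    ring
  rw [h1]
  have h2 : β * |(m : ℝ) + t| ≤ |β| * (|(m : ℝ)| + |t|) := by
    calc β * |(m : ℝ) + t| ≤ |β| * |(m : ℝ) + t| :=
          mul_le_mul_of_nonneg_right (le_abs_self β) (abs_nonneg _)
    _ ≤ |β| * (|(m : ℝ)| + |t|) :=
          mul_le_mul_of_nonneg_left (abs_add_le _ _) (abs_nonneg _)
  have h3 : -α * ((m : ℝ) + t) ^ 2 ≤ -α * (m : ℝ) ^ 2 + 2 * α * |t| * |(m : ℝ)| - α * t ^ 2 := by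
    have : ((m : ℝ) + t) ^ 2 = (m : ℝ) ^ 2 + 2 * (m : ℝ) * t + t ^ 2 := by ring
    rw [this]
    have hmt : -( (m:ℝ) * t) ≤ |(m : ℝ)| * |t| := by
      rw [← abs_mul]; exact neg_le_abs _
    nlinarith [abs_nonneg ((m:ℝ)), abs_nonneg t]
  nlinarith [sq_nonneg t, abs_nonneg ((m:ℝ)), abs_nonneg t, abs_nonneg β, hα]
lemma aux2 : ∀ (g : ℕ) (f : Fin g → ℤ → ℝ), (∀ i m, 0 ≤ f i m) → (∀ i, Summable (f i)) →
    Summable fun n : Fin g → ℤ => ∏ i, f i (n i) := by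
  intro g
  induction g with
  | zero => intro f _ _; exact .of_finite
  | succ g ih =>
    intro f h0 hs
    have h := (hs 0).mul_of_nonneg (ih (fun i => f i.succ) (fun i m => h0 _ _)
      (fun i => hs _)) (fun m => h0 0 m) (fun n => Finset.prod_nonneg fun i _ => h0 _ _)
    rw [← (Fin.consEquiv (fun _ : Fin (g + 1) => ℤ)).summable_iff]
    refine h.congr fun p => ?_
    simp [Fin.consEquiv, Fin.prod_univ_succ]

lemma aux3 {g : ℕ} (N : Matrix (Fin g) (Fin g) ℝ) (hN : N.PosDef) :
    ∃ c > 0, ∀ x : Fin g → ℝ, c * ∑ i, (x i) ^ 2 ≤ x ⬝ᵥ N.mulVec x := by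
  rcases Nat.eq_zero_or_pos g with hg | hg
  · subst hg
    exact ⟨1, one_pos, fun x => by simp [dotProduct]⟩
  have : Nonempty (Fin g) := ⟨⟨0, hg⟩⟩
  have hcont : Continuous fun x : Fin g → ℝ => x ⬝ᵥ N.mulVec x :=
    (continuous_id.dotProduct (continuous_const.matrix_mulVec continuous_id))
  have : Nontrivial (Fin g → ℝ) := Function.nontrivial
  have hsph : (Metric.sphere (0 : Fin g → ℝ) 1).Nonempty :=
    NormedSpace.sphere_nonempty.mpr zero_le_one
  obtain ⟨u, hu, hmin⟩ := (isCompact_sphere (0 : Fin g → ℝ) 1).exists_isMinOn hsph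
    hcont.continuousOn
  have hu1 : ‖u‖ = 1 := by simpa using hu
  have hu0 : u ≠ 0 := fun h => by simp [h] at hu1
  have hc0 : 0 < u ⬝ᵥ N.mulVec u := by simpa using hN.dotProduct_mulVec_pos hu0
  refine ⟨(u ⬝ᵥ N.mulVec u) / g, div_pos hc0 (Nat.cast_pos.mpr hg), fun x => ?_⟩
  rcases eq_or_ne x 0 with rfl | hx
  · simp
  · have hr : 0 < ‖x‖ := norm_pos_iff.mpr hx
    set r := ‖x‖
    have hmem : (r⁻¹ • x) ∈ Metric.sphere (0 : Fin g → ℝ) 1 := by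
      simp only [Metric.mem_sphere, dist_zero_right, norm_smul, norm_inv, Real.norm_eq_abs,
        abs_of_pos hr]
      exact inv_mul_cancel₀ hr.ne'
    have h1 : u ⬝ᵥ N.mulVec u ≤ (r⁻¹ • x) ⬝ᵥ N.mulVec (r⁻¹ • x) := hmin hmem
    have h2 : (r⁻¹ • x) ⬝ᵥ N.mulVec (r⁻¹ • x) = r⁻¹ * r⁻¹ * (x ⬝ᵥ N.mulVec x) := by
      rw [Matrix.mulVec_smul, smul_dotProduct, dotProduct_smul]
      simp [smul_eq_mul]; ring
    have h3 : ∑ i, (x i) ^ 2 ≤ g * r ^ 2 := by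
      calc ∑ i, (x i) ^ 2 ≤ ∑ _i : Fin g, r ^ 2 := by
            refine Finset.sum_le_sum fun i _ => ?_
            have h4 : |x i| ≤ r := by simpa using norm_le_pi_norm x i
            nlinarith [abs_nonneg (x i), le_abs_self (x i), neg_abs_le (x i)]
      _ = g * r ^ 2 := by simp [Finset.sum_const, mul_comm]
    rw [h2] at h1
    have hg' : (0 : ℝ) < g := Nat.cast_pos.mpr hg
    rw [div_mul_eq_mul_div, div_le_iff₀ hg']
    have : (u ⬝ᵥ N.mulVec u) * r ^ 2 ≤ x ⬝ᵥ N.mulVec x := by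
      have := mul_le_mul_of_nonneg_left h1 (by positivity : (0:ℝ) ≤ r ^ 2)
      calc (u ⬝ᵥ N.mulVec u) * r ^ 2 = r ^ 2 * (u ⬝ᵥ N.mulVec u) := by ring
      _ ≤ r ^ 2 * (r⁻¹ * r⁻¹ * (x ⬝ᵥ N.mulVec x)) := this
      _ = x ⬝ᵥ N.mulVec x := by field_simp
    calc (u ⬝ᵥ N.mulVec u) * ∑ i, (x i) ^ 2 ≤ (u ⬝ᵥ N.mulVec u) * (g * r ^ 2) :=
          mul_le_mul_of_nonneg_left h3 hc0.le
    _ = ((u ⬝ᵥ N.mulVec u) * r ^ 2) * g := by ring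
    _ ≤ (x ⬝ᵥ N.mulVec x) * g := mul_le_mul_of_nonneg_right this hg'.le


theorem summable_riemannThetaChar (g : ℕ) (Ω : Matrix (Fin g) (Fin g) ℂ)
    (hΩ : Ω.IsSymm) (hIm : (Ω.map Complex.im).PosDef)
    (a b : Fin g → ℝ) (z : Fin g → ℂ) :
    Summable (fun n : Fin g → ℤ =>
      Complex.exp ((Real.pi : ℂ) * Complex.I *
          dotProduct (fun i => (n i : ℂ) + (a i : ℂ))
            (Ω.mulVec (fun i => (n i : ℂ) + (a i : ℂ))) +
        2 * (Real.pi : ℂ) * Complex.I *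
          dotProduct (fun i => (n i : ℂ) + (a i : ℂ)) (fun i => z i + (b i : ℂ)))) := by
  set N := Ω.map Complex.im with hN
  set v : Fin g → ℝ := fun i => (z i).im with hv
  set y : (Fin g → ℤ) → Fin g → ℝ := fun n i => (n i : ℝ) + a i with hy
  obtain ⟨c, hc, hQ⟩ := aux3 N hIm
  -- real part of the exponent
  have hre : ∀ n : Fin g → ℤ,
      ((Real.pi : ℂ) * Complex.I *
          dotProduct (fun i => (n i : ℂ) + (a i : ℂ))
            (Ω.mulVec (fun i => (n i : ℂ) + (a i : ℂ))) +
        2 * (Real.pi : ℂ) * Complex.I *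
          dotProduct (fun i => (n i : ℂ) + (a i : ℂ)) (fun i => z i + (b i : ℂ))).re
      = -Real.pi * ((y n) ⬝ᵥ N.mulVec (y n)) - 2 * Real.pi * ((y n) ⬝ᵥ v) := by
    intro n
    have hx : (fun i => (n i : ℂ) + (a i : ℂ)) = fun i => ((y n i : ℝ) : ℂ) := by
      funext i; push_cast [hy]; ring
    rw [hx]
    simp only [Complex.add_re, Complex.mul_re, Complex.mul_im, Complex.I_re, Complex.I_im,
      Complex.ofReal_re, Complex.ofReal_im, Complex.re_ofNat, Complex.im_ofNat,
      mul_zero, zero_mul, mul_one, sub_zero, zero_sub, add_zero, zero_add, mul_neg, neg_mul]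
    have h1 : (dotProduct (fun i => ((y n i : ℝ) : ℂ))
        (Ω.mulVec fun i => ((y n i : ℝ) : ℂ))).im = (y n) ⬝ᵥ N.mulVec (y n) := by
      simp [dotProduct, Matrix.mulVec, Complex.im_sum, Complex.mul_im, hN]
    have h2 : (dotProduct (fun i => ((y n i : ℝ) : ℂ)) (fun i => z i + (b i : ℂ))).im
        = (y n) ⬝ᵥ v := by
      simp only [dotProduct, Complex.im_sum, Complex.mul_im, Complex.ofReal_re,
        Complex.ofReal_im, zero_mul, add_zero, Complex.add_im, Complex.ofReal_im, hv]
    rw [h1, h2]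
    ring
  -- comparison
  refine Summable.of_norm ?_
  have key := aux2 g (fun i m => Real.exp (-(Real.pi * c) * ((m : ℝ) + a i) ^ 2 +
      (2 * Real.pi * |v i|) * |(m : ℝ) + a i|))
    (fun i m => (Real.exp_pos _).le)
    (fun i => aux1 _ _ _ (by positivity))
  refine key.of_nonneg_of_le (fun n => norm_nonneg _) (fun n => ?_)
  rw [Complex.norm_exp, hre n]
  rw [← Real.exp_sum, Real.exp_le_exp]
  have hQ' := hQ (y n)
  have hlin : -((y n) ⬝ᵥ v) ≤ ∑ i, |y n i| * |v i| := by
    rw [dotProduct, ← Finset.sum_neg_distrib]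
    refine Finset.sum_le_sum fun i _ => ?_
    rw [← abs_mul]
    exact neg_le_abs _
  calc -Real.pi * ((y n) ⬝ᵥ N.mulVec (y n)) - 2 * Real.pi * ((y n) ⬝ᵥ v)
      ≤ -Real.pi * (c * ∑ i, (y n i) ^ 2) + 2 * Real.pi * ∑ i, |y n i| * |v i| := by
        have h3 : -Real.pi * ((y n) ⬝ᵥ N.mulVec (y n)) ≤ -Real.pi * (c * ∑ i, (y n i) ^ 2) := by
          have := Real.pi_pos
          nlinarith [hQ']
        have h4 : -(2 * Real.pi * ((y n) ⬝ᵥ v)) ≤ 2 * Real.pi * ∑ i, |y n i| * |v i| := by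
          have := Real.pi_pos
          calc -(2 * Real.pi * ((y n) ⬝ᵥ v)) = 2 * Real.pi * (-((y n) ⬝ᵥ v)) := by ring
          _ ≤ 2 * Real.pi * ∑ i, |y n i| * |v i| :=
            mul_le_mul_of_nonneg_left hlin (by positivity)
        linarith
    _ = ∑ i, (-(Real.pi * c) * ((n i : ℝ) + a i) ^ 2 +
          (2 * Real.pi * |v i|) * |(n i : ℝ) + a i|) := by
        simp only [Finset.mul_sum]
        rw [← Finset.sum_add_distrib]
        refine Finset.sum_congr rfl fun i _ => ?_
        simp only [hy]
        ring
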